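/- Let P be a finite poset such that for every x \in P the subposet {y \in P : y \ge x} is pure. Then for every v \in T(P) there exists v_0 \in T(P) with v_0(-\infty) = rank \hat{P} and v \ge v_0 in the partial order of T(P); consequently every minimal element v of the poset T(P) satisfies v(-\infty) = rank \hat{P}. (This is Miyazaki's sufficient condition for the Hibi ring R[I(P)] to be level, since R[I(P)] is level iff all minimal elements of T(P) take the value rank \hat{P} at -\infty.) -/

import Mathlib

open Classical
set_option linter.unusedSectionVars false

/-- `Hat P` is the poset `P` with a new least element `-∞ = ⊥` and a new
greatest element `∞ = ⊤` adjoined. -/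
abbrev Hat (P : Type*) := WithBot (WithTop P)

/-- The canonical inclusion of `P` into `Hat P`. -/
def toHat {P : Type*} (x : P) : Hat P := ((x : WithTop P) : WithBot (WithTop P))

/-- The rank of a poset: the maximal length (number of covering steps) of a
chain, encoded as the maximal `n` admitting a strictly increasing sequence of
`n + 1` elements. -/
noncomputable def rankN (Q : Type*) [Preorder Q] : ℕ :=
  sSup {n : ℕ | ∃ f : Fin (n + 1) → Q, StrictMono f}

/-- The height of `x` in a poset `Q`: the rank of the subposet `{y | y ≤ x}`. -/
noncomputable def heightN {Q : Type*} [Preorder Q] (x : Q) : ℕ :=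
  sSup {n : ℕ | ∃ f : Fin (n + 1) → Q, StrictMono f ∧ ∀ i, f i ≤ x}

/-- The depth of `x` in a poset `Q`: the rank of the subposet `{y | x ≤ y}`. -/
noncomputable def depthN {Q : Type*} [Preorder Q] (x : Q) : ℕ :=
  sSup {n : ℕ | ∃ f : Fin (n + 1) → Q, StrictMono f ∧ ∀ i, x ≤ f i}

/-- `v` belongs to `S(P)`: `v : Hat P → ℕ` is order-reversing with `v ∞ = 0`. -/
def memS (P : Type*) [PartialOrder P] (v : Hat P → ℕ) : Prop :=
  v ⊤ = 0 ∧ ∀ p q : Hat P, p ≤ q → v q ≤ v p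

/-- `v` belongs to `T(P)`: `v : Hat P → ℕ` is strictly order-reversing with
`v ∞ = 0`. -/
def memT (P : Type*) [PartialOrder P] (v : Hat P → ℕ) : Prop :=
  v ⊤ = 0 ∧ ∀ p q : Hat P, p < q → v q < v p

/-- The partial order of `T(P)`: `v ≥ w` iff `v` dominates `w` pointwise and the
pointwise difference `v - w` is order-reversing. -/
def Tge (P : Type*) [PartialOrder P] (v w : Hat P → ℕ) : Prop :=
  (∀ p : Hat P, w p ≤ v p) ∧ ∀ p q : Hat P, p ≤ q → v q - w q ≤ v p - w p

/-- `v` is a minimal element of the poset `T(P)`. -/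
def IsMinT (P : Type*) [PartialOrder P] (v : Hat P → ℕ) : Prop :=
  memT P v ∧ ∀ w : Hat P → ℕ, memT P w → Tge P v w → w = v

/-- A poset is pure if all its maximal chains have the same length, equivalently
the same cardinality. -/
def IsPure (P : Type*) [PartialOrder P] : Prop :=
  ∀ C D : Set P, IsMaxChain (· ≤ ·) C → IsMaxChain (· ≤ ·) D → C.ncard = D.ncard

section Aux

variable {Q : Type*} [PartialOrder Q] [Fintype Q]

lemma strictMono_fin_one {f : Fin 1 → Q} : StrictMono f :=
  fun i j hij => absurd (Subsingleton.elim i j ▸ hij) (lt_irrefl j)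

lemma depth_bdd (x : Q) :
    BddAbove {n : ℕ | ∃ f : Fin (n + 1) → Q, StrictMono f ∧ ∀ i, x ≤ f i} := by
  refine ⟨Fintype.card Q, fun n hn => ?_⟩
  obtain ⟨f, hf, -⟩ := hn
  have := Fintype.card_le_of_injective f hf.injective
  simp only [Fintype.card_fin] at this
  omega

lemma rank_bdd : BddAbove {n : ℕ | ∃ f : Fin (n + 1) → Q, StrictMono f} := by
  refine ⟨Fintype.card Q, fun n hn => ?_⟩
  obtain ⟨f, hf⟩ := hn
  have := Fintype.card_le_of_injective f hf.injective
  simp only [Fintype.card_fin] at this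
  omega

lemma depth_nonempty (x : Q) :
    {n : ℕ | ∃ f : Fin (n + 1) → Q, StrictMono f ∧ ∀ i, x ≤ f i}.Nonempty :=
  ⟨0, fun _ => x, strictMono_fin_one, fun _ => le_rfl⟩

lemma depth_spec (x : Q) :
    ∃ f : Fin (depthN x + 1) → Q, StrictMono f ∧ ∀ i, x ≤ f i :=
  Nat.sSup_mem (depth_nonempty x) (depth_bdd x)

lemma le_depthN {x : Q} {n : ℕ}
    (hn : ∃ f : Fin (n + 1) → Q, StrictMono f ∧ ∀ i, x ≤ f i) : n ≤ depthN x :=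
  le_csSup (depth_bdd x) hn

lemma depthN_le {x : Q} {B : ℕ}
    (hB : ∀ n, (∃ f : Fin (n + 1) → Q, StrictMono f ∧ ∀ i, x ≤ f i) → n ≤ B) :
    depthN x ≤ B :=
  csSup_le (depth_nonempty x) (fun n hn => hB n hn)

lemma rank_nonempty (x : Q) :
    {n : ℕ | ∃ f : Fin (n + 1) → Q, StrictMono f}.Nonempty :=
  ⟨0, fun _ => x, strictMono_fin_one⟩

lemma rank_spec (x : Q) : ∃ g : Fin (rankN Q + 1) → Q, StrictMono g :=
  Nat.sSup_mem (rank_nonempty x) rank_bdd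

lemma le_rankN {n : ℕ} (f : Fin (n + 1) → Q) (hf : StrictMono f) : n ≤ rankN Q :=
  le_csSup rank_bdd ⟨f, hf⟩

lemma strictMono_snoc {n : ℕ} {f : Fin n → Q} (hf : StrictMono f) {a : Q}
    (ha : ∀ i, f i < a) : StrictMono (Fin.snoc f a : Fin (n + 1) → Q) := by
  intro i j hij
  induction j using Fin.lastCases with
  | last =>
    obtain ⟨i', rfl⟩ := Fin.exists_castSucc_eq.2 (Fin.ne_of_lt hij)
    simpa [Fin.snoc_castSucc, Fin.snoc_last] using ha i'
  | cast j' =>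
    have hi : i ≠ Fin.last n :=
      Fin.ne_of_lt (lt_of_lt_of_le hij (Fin.castSucc_lt_last j').le)
    obtain ⟨i', rfl⟩ := Fin.exists_castSucc_eq.2 hi
    simp only [Fin.snoc_castSucc]
    exact hf (Fin.castSucc_lt_castSucc_iff.1 hij)

lemma range_snoc {n : ℕ} (f : Fin n → Q) (a : Q) :
    Set.range (Fin.snoc f a : Fin (n + 1) → Q) = insert a (Set.range f) := by
  ext u
  simp only [Set.mem_range, Set.mem_insert_iff]
  constructor
  · rintro ⟨i, rfl⟩
    induction i using Fin.lastCases with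
    | last => left; simp
    | cast i => right; exact ⟨i, by simp⟩
  · rintro (rfl | ⟨i, rfl⟩)
    · exact ⟨Fin.last n, by simp⟩
    · exact ⟨i.castSucc, by simp⟩

lemma strictMono_cons {n : ℕ} {f : Fin n → Q} (hf : StrictMono f) {a : Q}
    (ha : ∀ i, a < f i) : StrictMono (Fin.cons a f : Fin (n + 1) → Q) := by
  intro i j hij
  induction j using Fin.cases with
  | zero => exact absurd hij (Fin.not_lt_zero i)
  | succ j' =>
    induction i using Fin.cases with
    | zero => simpa using ha j'
    | succ i' =>
      simp only [Fin.cons_succ]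
      exact hf (Fin.succ_lt_succ_iff.1 hij)

lemma isChain_range {n : ℕ} {f : Fin n → Q} (hf : Monotone f) :
    IsChain (· ≤ ·) (Set.range f) := by
  rintro _ ⟨i, rfl⟩ _ ⟨j, rfl⟩ -
  rcases le_total i j with h | h
  · exact Or.inl (hf h)
  · exact Or.inr (hf h)

lemma ncard_range_strictMono {n : ℕ} {f : Fin (n + 1) → Q} (hf : StrictMono f) :
    (Set.range f).ncard = n + 1 := by
  rw [← Nat.card_coe_set_eq, Nat.card_range_of_injective hf.injective,
    Nat.card_eq_fintype_card, Fintype.card_fin]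

lemma chain_exists_chainFun :
    ∀ (n : ℕ) (C : Set Q), IsChain (· ≤ ·) C → C.ncard = n + 1 →
      ∃ f : Fin (n + 1) → Q, StrictMono f ∧ Set.range f = C := by
  intro n
  induction n with
  | zero =>
    intro C hC hcard
    obtain ⟨a, rfl⟩ := Set.ncard_eq_one.1 hcard
    exact ⟨fun _ => a, strictMono_fin_one, by simp⟩
  | succ n ih =>
    intro C hC hcard
    have hfin : C.Finite := C.toFinite
    have hne : C.Nonempty := Set.nonempty_of_ncard_ne_zero (by omega)
    obtain ⟨m, hmC, hmax⟩ := Set.Finite.exists_maximalFor id C hfin hne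
    have hgreat : ∀ c ∈ C, c ≤ m := by
      intro c hc
      rcases eq_or_ne c m with rfl | hne'
      · exact le_rfl
      · rcases hC.total hc hmC with h1 | h1
        · exact h1
        · exact absurd (le_antisymm (hmax hc h1) h1) hne'
    have hcard' : (C \ {m}).ncard = n + 1 := by
      rw [Set.ncard_diff_singleton_of_mem hmC]; omega
    obtain ⟨f, hf, hrange⟩ := ih (C \ {m}) (hC.mono Set.diff_subset) hcard'
    refine ⟨Fin.snoc f m, strictMono_snoc hf ?_, ?_⟩
    · intro i
      have hi : f i ∈ C \ {m} := hrange ▸ Set.mem_range_self i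
      exact lt_of_le_of_ne (hgreat _ hi.1) (by simpa using hi.2)
    · rw [range_snoc, hrange, Set.insert_diff_singleton, Set.insert_eq_self.2 hmC]

lemma depth_lt {x y : Q} (hxy : x < y) : depthN y < depthN x := by
  obtain ⟨f, hf, hyf⟩ := depth_spec y
  have : depthN y + 1 ≤ depthN x := by
    refine le_depthN ⟨Fin.cons x f, strictMono_cons hf (fun i => lt_of_lt_of_le hxy (hyf i)), ?_⟩
    intro i
    induction i using Fin.cases with
    | zero => simp
    | succ i' => simpa using (hxy.le.trans (hyf i'))
  omega

lemma pure_depth (hQ : IsPure Q) (x : Q) :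
    ∃ (m : ℕ) (e : Fin (m + 1) → Q), StrictMono e ∧ e (Fin.last m) = x ∧
      rankN Q ≤ m + depthN x := by
  obtain ⟨f, hf, hxf⟩ := depth_spec x
  have hCchain : IsChain (· ≤ ·) (insert x (Set.range f)) := by
    refine (isChain_range hf.monotone).insert ?_
    rintro _ ⟨i, rfl⟩ -
    exact Or.inl (hxf i)
  obtain ⟨D, hD, hCD⟩ := hCchain.exists_maxChain
  obtain ⟨g, hg⟩ := rank_spec x
  have hgmax : IsMaxChain (· ≤ ·) (Set.range g) := by
    refine ⟨isChain_range hg.monotone, fun t ht hsub => ?_⟩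
    by_contra hne
    have hlt : (Set.range g).ncard < t.ncard :=
      Set.ncard_lt_ncard (ssubset_of_subset_of_ne hsub hne) t.toFinite
    rw [ncard_range_strictMono hg] at hlt
    obtain ⟨f', hf', -⟩ := chain_exists_chainFun (t.ncard - 1) t ht (by omega)
    have := le_rankN f' hf'
    omega
  have hDcard : D.ncard = rankN Q + 1 := by
    have := hQ D (Set.range g) hD hgmax
    rw [this, ncard_range_strictMono hg]
  have hxD : x ∈ D := hCD (Set.mem_insert _ _)
  have hunion : {u ∈ D | u ≤ x} ∪ {u ∈ D | x ≤ u} = D := by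
    ext u
    simp only [Set.mem_union, Set.mem_setOf_eq]
    constructor
    · rintro (⟨h1, -⟩ | ⟨h1, -⟩) <;> exact h1
    · intro hu
      rcases hD.1.total hu hxD with h1 | h1
      · exact Or.inl ⟨hu, h1⟩
      · exact Or.inr ⟨hu, h1⟩
  have hinter : {u ∈ D | u ≤ x} ∩ {u ∈ D | x ≤ u} = {x} := by
    ext u
    simp only [Set.mem_inter_iff, Set.mem_setOf_eq, Set.mem_singleton_iff]
    constructor
    · rintro ⟨⟨-, h1⟩, -, h2⟩; exact le_antisymm h1 h2
    · rintro rfl; exact ⟨⟨hxD, le_rfl⟩, hxD, le_rfl⟩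
  have hsum : {u ∈ D | u ≤ x}.ncard + {u ∈ D | x ≤ u}.ncard = rankN Q + 2 := by
    have h1 := Set.ncard_union_add_ncard_inter {u ∈ D | u ≤ x} {u ∈ D | x ≤ u}
      (Set.toFinite _) (Set.toFinite _)
    rw [hunion, hinter, hDcard, Set.ncard_singleton] at h1
    omega
  have hxD2 : x ∈ {u ∈ D | x ≤ u} := ⟨hxD, le_rfl⟩
  have hD2pos : 0 < {u ∈ D | x ≤ u}.ncard := (Set.ncard_pos).2 ⟨x, hxD2⟩
  have hD2card : {u ∈ D | x ≤ u}.ncard ≤ depthN x + 1 := by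
    obtain ⟨f2, hf2, hr2⟩ := chain_exists_chainFun ({u ∈ D | x ≤ u}.ncard - 1) {u ∈ D | x ≤ u}
      (hD.1.mono (Set.sep_subset _ _)) (by omega)
    have hmem : ∀ i, x ≤ f2 i := fun i =>
      (show f2 i ∈ {u ∈ D | x ≤ u} by rw [← hr2]; exact Set.mem_range_self i).2
    have := le_depthN ⟨f2, hf2, hmem⟩
    omega
  have hxD1 : x ∈ {u ∈ D | u ≤ x} := ⟨hxD, le_rfl⟩
  have hD1pos : 0 < {u ∈ D | u ≤ x}.ncard := (Set.ncard_pos).2 ⟨x, hxD1⟩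
  obtain ⟨e, he, hre⟩ := chain_exists_chainFun ({u ∈ D | u ≤ x}.ncard - 1) {u ∈ D | u ≤ x}
    (hD.1.mono (Set.sep_subset _ _)) (by omega)
  have hmem1 : ∀ i, e i ∈ {u ∈ D | u ≤ x} := fun i => by
    rw [← hre]; exact Set.mem_range_self i
  have hx : x ∈ Set.range e := by rw [hre]; exact hxD1
  obtain ⟨j, hj⟩ := hx
  refine ⟨{u ∈ D | u ≤ x}.ncard - 1, e, he, ?_, by omega⟩
  exact le_antisymm (hmem1 (Fin.last _)).2 (hj.symm.trans_le (he.monotone (Fin.le_last j)))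

end Aux

instance hatFintype {P : Type*} [Fintype P] : Fintype (Hat P) :=
  inferInstanceAs (Fintype (Option (Option P)))

section HatLemmas

variable {P : Type*} [Fintype P] [PartialOrder P]

lemma toHat_strictMono : StrictMono (toHat (P := P)) := fun a b h => by
  simp only [toHat]
  exact WithBot.coe_lt_coe.2 (WithTop.coe_lt_coe.2 h)

lemma toHat_le {a b : P} : toHat a ≤ toHat b ↔ a ≤ b := by
  simp only [toHat, WithBot.coe_le_coe, WithTop.coe_le_coe]

lemma toHat_lt {a b : P} : toHat a < toHat b ↔ a < b := by
  simp only [toHat, WithBot.coe_lt_coe, WithTop.coe_lt_coe]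

lemma toHat_lt_top (a : P) : toHat a < (⊤ : Hat P) := by
  rw [← WithBot.coe_top]
  exact WithBot.coe_lt_coe.2 (WithTop.coe_lt_top a)

lemma toHat_between {x : P} {w : Hat P} (h1 : toHat x ≤ w) (h2 : w ≠ ⊤) :
    ∃ z : P, w = toHat z ∧ x ≤ z := by
  induction w using WithBot.recBotCoe with
  | bot => exact absurd h1 (WithBot.not_coe_le_bot _)
  | coe w' =>
    induction w' using WithTop.recTopCoe with
    | top => exact absurd WithBot.coe_top h2
    | coe z =>
      refine ⟨z, rfl, ?_⟩
      have := WithBot.coe_le_coe.1 h1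
      exact WithTop.coe_le_coe.1 this

lemma exists_toHat {w : Hat P} (h1 : w ≠ ⊥) (h2 : w ≠ ⊤) : ∃ z : P, w = toHat z := by
  induction w using WithBot.recBotCoe with
  | bot => exact absurd rfl h1
  | coe w' =>
    induction w' using WithTop.recTopCoe with
    | top => exact absurd WithBot.coe_top h2
    | coe z => exact ⟨z, rfl⟩

lemma memT.mono {v : Hat P → ℕ} (hv : memT P v) {p q : Hat P} (hpq : p ≤ q) :
    v q ≤ v p := by
  rcases hpq.lt_or_eq with h | rfl
  · exact (hv.2 _ _ h).le
  · exact le_rfl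

lemma memT.chain_le {v : Hat P → ℕ} (hv : memT P v) :
    ∀ {k : ℕ} (g : Fin (k + 1) → Hat P), StrictMono g →
      v (g (Fin.last k)) + k ≤ v (g 0) := by
  intro k
  induction k with
  | zero =>
    intro g _
    have h0 : Fin.last 0 = 0 := rfl
    rw [h0]
    omega
  | succ k ihk =>
    intro g hg
    have h1 := ihk (g ∘ Fin.castSucc)
      (hg.comp (fun a b hab => Fin.castSucc_lt_castSucc_iff.2 hab))
    simp only [Function.comp_apply, Fin.castSucc_zero] at h1
    have h2 : v (g (Fin.last (k + 1))) < v (g (Fin.castSucc (Fin.last k))) :=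
      hv.2 _ _ (hg (Fin.castSucc_lt_last _))
    omega

lemma memT.depth_le {v : Hat P → ℕ} (hv : memT P v) (p : Hat P) : depthN p ≤ v p := by
  obtain ⟨f, hf, hpf⟩ := depth_spec p
  have h1 := hv.chain_le f hf
  have h2 := hv.mono (hpf 0)
  omega

lemma rank_eq_depth_bot : rankN (Hat P) = depthN (⊥ : Hat P) := by
  unfold rankN depthN
  congr 1
  ext n
  simp only [Set.mem_setOf_eq]
  exact ⟨fun ⟨f, hf⟩ => ⟨f, hf, fun i => bot_le⟩, fun ⟨f, hf, _⟩ => ⟨f, hf⟩⟩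

lemma depth_toHat_le (x : P) :
    depthN (toHat x) ≤ rankN {y : P // x ≤ y} + 1 := by
  letI : Fintype {y : P // x ≤ y} := Fintype.ofFinite _
  refine depthN_le ?_
  rintro n ⟨f, hf, hxf⟩
  cases n with
  | zero => exact Nat.zero_le _
  | succ k =>
    choose z hz hxz using fun i : Fin (k + 1) =>
      toHat_between (hxf i.castSucc)
        (ne_top_of_lt (lt_of_lt_of_le (hf (Fin.castSucc_lt_last i)) le_top))
    have hsm : StrictMono (fun i : Fin (k + 1) => (⟨z i, hxz i⟩ : {y : P // x ≤ y})) := by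
      intro i j hij
      have h1 := hf (Fin.castSucc_lt_castSucc_iff.2 hij)
      rw [hz i, hz j] at h1
      exact Subtype.mk_lt_mk.2 (toHat_lt.1 h1)
    have := le_rankN _ hsm
    omega

lemma depth_toHat_lt {x y : P} (hxy : x ≤ y) :
    depthN (⟨y, hxy⟩ : {z : P // x ≤ z}) + 1 ≤ depthN (toHat y) := by
  letI : Fintype {z : P // x ≤ z} := Fintype.ofFinite _
  obtain ⟨f, hf, hyf⟩ := depth_spec (⟨y, hxy⟩ : {z : P // x ≤ z})
  refine le_depthN ⟨Fin.snoc (fun i => toHat (f i).1) ⊤, ?_, ?_⟩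
  · refine strictMono_snoc ?_ ?_
    · intro i j hij
      exact toHat_strictMono (Subtype.coe_lt_coe.2 (hf hij))
    · intro i
      exact toHat_lt_top _
  · intro i
    induction i using Fin.lastCases with
    | last => simp only [Fin.snoc_last]; exact le_top
    | cast i =>
      rw [Fin.snoc_castSucc]
      exact toHat_le.2 (Subtype.coe_le_coe.2 (hyf i))

lemma key_ineq (h : ∀ x : P, IsPure {y : P // x ≤ y}) {v : Hat P → ℕ}
    (hv : memT P v) (p q : Hat P) (hpq : p ≤ q) (hp : p ≠ ⊥) :
    v q + depthN p ≤ v p + depthN q := by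
  rcases hpq.lt_or_eq with hlt | rfl
  · rcases eq_or_ne q ⊤ with rfl | hq
    · have h1 := hv.depth_le p
      have h2 := hv.1
      omega
    · have hpt : p ≠ ⊤ := ne_top_of_lt hlt
      obtain ⟨x, rfl⟩ := exists_toHat hp hpt
      obtain ⟨y, rfl, hxy⟩ := toHat_between hlt.le hq
      letI : Fintype {z : P // x ≤ z} := Fintype.ofFinite _
      obtain ⟨m, e, he, helast, hrk⟩ := pure_depth (h x) (⟨y, hxy⟩ : {z : P // x ≤ z})
      have hc : v (toHat y) + m ≤ v (toHat x) := by
        have h1 := hv.chain_le (fun i => toHat (e i).1)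
          (fun i j hij => toHat_strictMono (Subtype.coe_lt_coe.2 (he hij)))
        have h1' : v (toHat ((e (Fin.last m)) : P)) + m ≤ v (toHat ((e 0) : P)) := h1
        have hy1 : ((e (Fin.last m)) : P) = y := by rw [helast]
        rw [hy1] at h1'
        clear h1
        have h2 := hv.mono (toHat_le.2 (e 0).2)
        omega
      have ha := depth_toHat_le x
      have hb := depth_toHat_lt hxy
      omega
  · omega

lemma tge_refl (v : Hat P → ℕ) : Tge P v v :=
  ⟨fun _ => le_rfl, fun _ _ _ => by omega⟩

lemma tge_trans {u v w : Hat P → ℕ} (h1 : Tge P u v) (h2 : Tge P v w) : Tge P u w := by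
  refine ⟨fun p => (h2.1 p).trans (h1.1 p), fun p q hpq => ?_⟩
  have e1 := h1.2 p q hpq
  have e2 := h2.2 p q hpq
  have e3 := h1.1 p
  have e4 := h1.1 q
  have e5 := h2.1 p
  have e6 := h2.1 q
  omega

end HatLemmas


/-- **Miyazaki's sufficient condition for levelness.** Suppose that for every
`x ∈ P` the subposet `{y ∈ P : y ≥ x}` is pure. Then for every `v ∈ T(P)` there
exists `v₀ ∈ T(P)` with `v₀(-∞) = rank (Hat P)` and `v ≥ v₀` in `T(P)`;
consequently every minimal element `v` of `T(P)` satisfies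
`v(-∞) = rank (Hat P)`. -/
theorem miyazaki_level (P : Type*) [Fintype P] [PartialOrder P]
    (h : ∀ x : P, IsPure {y : P // x ≤ y}) :
    (∀ v : Hat P → ℕ, memT P v →
        ∃ v₀ : Hat P → ℕ, memT P v₀ ∧ v₀ ⊥ = rankN (Hat P) ∧ Tge P v v₀) ∧
      ∀ v : Hat P → ℕ, IsMinT P v → v ⊥ = rankN (Hat P) := by
  have hrk : ∀ v : Hat P → ℕ, memT P v → rankN (Hat P) ≤ v ⊥ := by
    intro v hv
    rw [rank_eq_depth_bot]
    exact hv.depth_le ⊥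
  have hstep : ∀ v : Hat P → ℕ, memT P v → rankN (Hat P) < v ⊥ →
      ∃ w : Hat P → ℕ, memT P w ∧ Tge P v w ∧ w ⊥ + 1 = v ⊥ := by
    intro v hv hlt
    have hAbot : depthN (⊥ : Hat P) < v ⊥ := by rw [← rank_eq_depth_bot]; exact hlt
    have hAdown : ∀ p q : Hat P, p ≤ q → depthN q < v q → depthN p < v p := by
      intro p q hpq hq
      rcases eq_or_ne p ⊥ with rfl | hp
      · exact hAbot
      · have hk := key_ineq h hv p q hpq hp
        omega
    refine ⟨fun p => v p - (if depthN p < v p then 1 else 0), ⟨?_, ?_⟩, ⟨?_, ?_⟩, ?_⟩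
    · have hT : ¬ depthN (⊤ : Hat P) < v ⊤ := by rw [hv.1]; omega
      have h0 := hv.1
      simp only [if_neg hT]
      omega
    · intro p q hpq
      have hvpq := hv.2 p q hpq
      by_cases hq : depthN q < v q
      · have hp : depthN p < v p := hAdown p q hpq.le hq
        simp only [if_pos hp, if_pos hq]
        omega
      · have hdq := hv.depth_le q
        have hdlt := depth_lt hpq
        by_cases hp : depthN p < v p
        · simp only [if_pos hp, if_neg hq]
          omega
        · simp only [if_neg hp, if_neg hq]
          omega
    · intro p
      exact Nat.sub_le _ _
    · intro p q hpq
      by_cases hq : depthN q < v q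
      · have hp := hAdown p q hpq hq
        simp only [if_pos hp, if_pos hq]
        omega
      · simp only [if_neg hq, Nat.sub_zero, Nat.sub_self]
        exact Nat.zero_le _
    · simp only [if_pos hAbot]
      omega
  have part1 : ∀ v : Hat P → ℕ, memT P v →
      ∃ v₀ : Hat P → ℕ, memT P v₀ ∧ v₀ ⊥ = rankN (Hat P) ∧ Tge P v v₀ := by
    have main : ∀ (n : ℕ) (v : Hat P → ℕ), memT P v → v ⊥ ≤ n + rankN (Hat P) →
        ∃ v₀ : Hat P → ℕ, memT P v₀ ∧ v₀ ⊥ = rankN (Hat P) ∧ Tge P v v₀ := by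
      intro n
      induction n with
      | zero =>
        intro v hv hle
        have h1 := hrk v hv
        exact ⟨v, hv, by omega, tge_refl v⟩
      | succ n ih =>
        intro v hv hle
        rcases eq_or_lt_of_le (hrk v hv) with heq | hlt
        · exact ⟨v, hv, heq.symm, tge_refl v⟩
        · obtain ⟨w, hw, hvw, hwb⟩ := hstep v hv hlt
          obtain ⟨v₀, h1, h2, h3⟩ := ih w hw (by omega)
          exact ⟨v₀, h1, h2, tge_trans hvw h3⟩
    intro v hv
    exact main (v ⊥) v hv (by omega)
  refine ⟨part1, ?_⟩
  intro v hv
  obtain ⟨v₀, h1, h2, h3⟩ := part1 v hv.1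
  rw [← hv.2 v₀ h1 h3]
  exact h2
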